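/- arXiv:2206.02761 — 5 statements merged into one kernel-verified Lean document; each statement's English description precedes it below -/
import Mathlib

section
/- Let τᵏ and τˡ be strictly positive probability distributions on finite index sets J and I respectively, and let N : I → Set J partition J. Suppose λ : I → ℝ satisfies, for all i, (∑_{j ∈ N(i)} τᵏ_j e^{-λ_i}) / (∑_t ∑_{s ∈ N(t)} τᵏ_s e^{-λ_t}) = τˡ_i e^{λ_i} / (∑_s τˡ_s e^{λ_s}). Define μˡ_i = τˡ_i e^{λ_i} / (∑_s τˡ_s e^{λ_s}) and μᵏ_j = τᵏ_j e^{-λ_i} / (∑_t ∑_{s ∈ N(t)} τᵏ_s e^{-λ_t}) for j ∈ N(i). Then (μᵏ, μˡ) is the unique minimizer of D_KL(μᵏ‖τᵏ) + D_KL(μˡ‖τˡ) over pairs of probability distributions satisfying μˡ_i = ∑_{j ∈ N(i)} μᵏ_j for all i. -/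
open Finset

noncomputable def KL {α : Type*} [Fintype α] (μ τ : α → ℝ) : ℝ :=
  ∑ i, μ i * Real.log (μ i / τ i)

private lemma pt_ineq {a b : ℝ} (ha : 0 ≤ a) (hb : 0 < b) :
    a - b ≤ a * Real.log (a / b) ∧ (a * Real.log (a / b) = a - b → a = b) := by
  rcases eq_or_lt_of_le ha with h | h
  · constructor
    · simp [← h]; linarith
    · intro he; simp [← h] at he; linarith
  · have hba : 0 < b / a := div_pos hb h
    have hlog : Real.log (b / a) ≤ b / a - 1 := Real.log_le_sub_one_of_pos hba
    have hflip : Real.log (a / b) = -Real.log (b / a) := by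
      rw [Real.log_div (ne_of_gt hb) (ne_of_gt h), Real.log_div (ne_of_gt h) (ne_of_gt hb)]
      ring
    constructor
    · rw [hflip]
      have := mul_le_mul_of_nonneg_left hlog (le_of_lt h)
      have hba' : a * (b / a - 1) = b - a := by field_simp
      nlinarith
    · intro he
      by_contra hne
      have hne1 : b / a ≠ 1 := by
        intro h1
        exact hne ((div_eq_one_iff_eq (ne_of_gt h)).1 h1).symm
      have hstrict : Real.log (b / a) < b / a - 1 := Real.log_lt_sub_one_of_pos hba hne1
      have := mul_lt_mul_of_pos_left hstrict h
      have hba' : a * (b / a - 1) = b - a := by field_simp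
      rw [hflip] at he
      nlinarith

private lemma gibbs {α : Type*} [Fintype α] (p q : α → ℝ)
    (hp : ∀ i, 0 ≤ p i) (hq : ∀ i, 0 < q i)
    (hp1 : ∑ i, p i = 1) (hq1 : ∑ i, q i = 1) :
    0 ≤ KL p q ∧ (KL p q = 0 → p = q) := by
  have h1 : ∀ i ∈ (univ : Finset α), (0:ℝ) ≤ p i * Real.log (p i / q i) - (p i - q i) :=
    fun i _ => sub_nonneg.2 (pt_ineq (hp i) (hq i)).1
  have hsum : ∑ i, (p i * Real.log (p i / q i) - (p i - q i)) = KL p q := by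
    rw [Finset.sum_sub_distrib, Finset.sum_sub_distrib, hp1, hq1]
    simp [KL]
  constructor
  · rw [← hsum]; exact Finset.sum_nonneg h1
  · intro h0
    have hz := (Finset.sum_eq_zero_iff_of_nonneg h1).1 (hsum.trans h0)
    funext i
    have := hz i (mem_univ i)
    exact (pt_ineq (hp i) (hq i)).2 (by linarith)

private lemma splitKL {β : Type*} [Fintype β] (ν μ τ : β → ℝ)
    (hμ : ∀ b, 0 < μ b) (hτ : ∀ b, 0 < τ b) :
    KL ν τ = KL ν μ + ∑ b, ν b * Real.log (μ b / τ b) := by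
  rw [KL, KL, ← Finset.sum_add_distrib]
  refine Finset.sum_congr rfl fun b _ => ?_
  rcases eq_or_ne (ν b) 0 with h | h
  · simp [h]
  · rw [← mul_add, ← Real.log_mul (div_ne_zero h (ne_of_gt (hμ b)))
      (div_ne_zero (ne_of_gt (hμ b)) (ne_of_gt (hτ b)))]
    congr 2
    have h1 := (hμ b).ne'
    have h2 := (hτ b).ne'
    field_simp

theorem stmt0 {I J : Type*} [Fintype I] [Fintype J] [DecidableEq I]
    (cls : J → I)
    (τk : J → ℝ) (τl : I → ℝ)
    (hτk : ∀ j, 0 < τk j) (hτl : ∀ i, 0 < τl i)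
    (hτk1 : ∑ j, τk j = 1) (hτl1 : ∑ i, τl i = 1)
    (lam : I → ℝ)
    (Zk : ℝ) (hZk : Zk = ∑ t, ∑ s ∈ univ.filter (fun s => cls s = t), τk s * Real.exp (-lam t))
    (Zl : ℝ) (hZl : Zl = ∑ s, τl s * Real.exp (lam s))
    (hcons : ∀ i, (∑ j ∈ univ.filter (fun j => cls j = i), τk j * Real.exp (-lam i)) / Zk
              = τl i * Real.exp (lam i) / Zl)
    (μk : J → ℝ) (hμk : ∀ j, μk j = τk j * Real.exp (-lam (cls j)) / Zk)
    (μl : I → ℝ) (hμl : ∀ i, μl i = τl i * Real.exp (lam i) / Zl) :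
    ((∀ j, 0 ≤ μk j) ∧ (∑ j, μk j = 1) ∧ (∀ i, 0 ≤ μl i) ∧ (∑ i, μl i = 1) ∧
      (∀ i, μl i = ∑ j ∈ univ.filter (fun j => cls j = i), μk j)) ∧
    ∀ νk : J → ℝ, ∀ νl : I → ℝ,
      (∀ j, 0 ≤ νk j) → (∑ j, νk j = 1) → (∀ i, 0 ≤ νl i) → (∑ i, νl i = 1) →
      (∀ i, νl i = ∑ j ∈ univ.filter (fun j => cls j = i), νk j) →
      (KL μk τk + KL μl τl ≤ KL νk τk + KL νl τl ∧
        (KL νk τk + KL νl τl = KL μk τk + KL μl τl → νk = μk ∧ νl = μl)) := by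
  -- nonemptiness
  have hI : Nonempty I := by
    by_contra h
    rw [not_nonempty_iff] at h
    simp at hτl1
  have hJ : Nonempty J := by
    by_contra h
    rw [not_nonempty_iff] at h
    simp at hτk1
  -- Zk as a plain sum over J
  have hZk' : Zk = ∑ j, τk j * Real.exp (-lam (cls j)) := by
    rw [hZk]
    rw [← Finset.sum_fiberwise univ cls (fun j => τk j * Real.exp (-lam (cls j)))]
    refine Finset.sum_congr rfl fun t _ => Finset.sum_congr rfl fun s hs => ?_
    rw [(mem_filter.1 hs).2]
  have hZkpos : 0 < Zk := by
    rw [hZk']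
    exact Finset.sum_pos (fun j _ => mul_pos (hτk j) (Real.exp_pos _)) univ_nonempty
  have hZlpos : 0 < Zl := by
    rw [hZl]
    exact Finset.sum_pos (fun i _ => mul_pos (hτl i) (Real.exp_pos _)) univ_nonempty
  -- positivity of μ
  have hμkpos : ∀ j, 0 < μk j := fun j => by
    rw [hμk]; exact div_pos (mul_pos (hτk j) (Real.exp_pos _)) hZkpos
  have hμlpos : ∀ i, 0 < μl i := fun i => by
    rw [hμl]; exact div_pos (mul_pos (hτl i) (Real.exp_pos _)) hZlpos
  -- sums equal 1
  have hμk1 : ∑ j, μk j = 1 := by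
    rw [Finset.sum_congr rfl fun j _ => hμk j, ← Finset.sum_div, ← hZk']
    exact div_self (ne_of_gt hZkpos)
  have hμl1 : ∑ i, μl i = 1 := by
    rw [Finset.sum_congr rfl fun i _ => hμl i, ← Finset.sum_div, ← hZl]
    exact div_self (ne_of_gt hZlpos)
  -- consistency
  have hμcons : ∀ i, μl i = ∑ j ∈ univ.filter (fun j => cls j = i), μk j := by
    intro i
    have : ∑ j ∈ univ.filter (fun j => cls j = i), μk j
        = (∑ j ∈ univ.filter (fun j => cls j = i), τk j * Real.exp (-lam i)) / Zk := by
      rw [Finset.sum_div]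
      refine Finset.sum_congr rfl fun j hj => ?_
      rw [hμk, (mem_filter.1 hj).2]
    rw [this, hcons, hμl]
  refine ⟨⟨fun j => (hμkpos j).le, hμk1, fun i => (hμlpos i).le, hμl1, hμcons⟩, ?_⟩
  -- key identity: for any feasible ν, objective = KL ν μ - log Zk - log Zl
  have key : ∀ (νk : J → ℝ) (νl : I → ℝ), (∀ j, 0 ≤ νk j) → (∑ j, νk j = 1) →
      (∀ i, νl i = ∑ j ∈ univ.filter (fun j => cls j = i), νk j) →
      KL νk τk + KL νl τl = KL νk μk + KL νl μl - Real.log Zk - Real.log Zl := by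
    intro νk νl hνk hνk1 hνcons
    have logμk : ∀ j, Real.log (μk j / τk j) = -lam (cls j) - Real.log Zk := by
      intro j
      have : μk j / τk j = Real.exp (-lam (cls j)) / Zk := by
        have h1 := (hτk j).ne'
        have h2 := hZkpos.ne'
        rw [hμk]; field_simp
      rw [this, Real.log_div (Real.exp_ne_zero _) (ne_of_gt hZkpos), Real.log_exp]
    have logμl : ∀ i, Real.log (μl i / τl i) = lam i - Real.log Zl := by
      intro i
      have : μl i / τl i = Real.exp (lam i) / Zl := by
        have h1 := (hτl i).ne'
        have h2 := hZlpos.ne'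
        rw [hμl]; field_simp
      rw [this, Real.log_div (Real.exp_ne_zero _) (ne_of_gt hZlpos), Real.log_exp]
    have hνl1 : ∑ i, νl i = ∑ j, νk j := by
      rw [Finset.sum_congr rfl fun i _ => hνcons i]
      exact Finset.sum_fiberwise univ cls νk
    have hfib : ∑ j, νk j * lam (cls j) = ∑ i, νl i * lam i := by
      rw [← Finset.sum_fiberwise univ cls (fun j => νk j * lam (cls j))]
      refine Finset.sum_congr rfl fun i _ => ?_
      rw [hνcons i, Finset.sum_mul]
      refine Finset.sum_congr rfl fun j hj => ?_
      rw [(mem_filter.1 hj).2]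
    rw [splitKL νk μk τk hμkpos hτk, splitKL νl μl τl hμlpos hτl]
    have e1 : ∑ j, νk j * Real.log (μk j / τk j)
        = -(∑ j, νk j * lam (cls j)) - Real.log Zk := by
      rw [Finset.sum_congr rfl fun j _ => by rw [logμk j]]
      rw [Finset.sum_congr rfl (g := fun j => -(νk j * lam (cls j)) - νk j * Real.log Zk)
        (fun j _ => by ring)]
      rw [Finset.sum_sub_distrib, Finset.sum_neg_distrib, ← Finset.sum_mul, hνk1]
      ring
    have e2 : ∑ i, νl i * Real.log (μl i / τl i)
        = (∑ i, νl i * lam i) - Real.log Zl := by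
      rw [Finset.sum_congr rfl fun i _ => by rw [logμl i]]
      rw [Finset.sum_congr rfl (g := fun i => νl i * lam i - νl i * Real.log Zl)
        (fun i _ => by ring)]
      rw [Finset.sum_sub_distrib, ← Finset.sum_mul, hνl1, hνk1]
      ring
    rw [e1, e2, hfib]
    ring
  -- baseline value at μ
  have hKLμμk : KL μk μk = 0 := by
    rw [KL]
    refine Finset.sum_eq_zero fun j _ => ?_
    rw [div_self (ne_of_gt (hμkpos j)), Real.log_one, mul_zero]
  have hKLμμl : KL μl μl = 0 := by
    rw [KL]
    refine Finset.sum_eq_zero fun i _ => ?_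
    rw [div_self (ne_of_gt (hμlpos i)), Real.log_one, mul_zero]
  have hbase : KL μk τk + KL μl τl = -Real.log Zk - Real.log Zl := by
    rw [key μk μl (fun j => (hμkpos j).le) hμk1 hμcons, hKLμμk, hKLμμl]
    ring
  intro νk νl hνk hνk1 hνl hνl1 hνcons
  have hid := key νk νl hνk hνk1 hνcons
  have gk := gibbs νk μk hνk hμkpos hνk1 hμk1
  have gl := gibbs νl μl hνl hμlpos hνl1 hμl1
  constructor
  · rw [hid, hbase]
    linarith [gk.1, gl.1]
  · intro heq
    rw [hid, hbase] at heq
    have hk0 : KL νk μk = 0 := by linarith [gk.1, gl.1]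
    have hl0 : KL νl μl = 0 := by linarith [gk.1, gl.1]
    exact ⟨gk.2 hk0, gl.2 hl0⟩
end

section
/- Closed form for the consistency program: let τᵏ, τˡ be strictly positive probability vectors on J and I with N : I → Set J a partition with nonempty blocks, and let τ̄_i = ∑_{j∈N(i)} τᵏ_j. Then the minimizer (μᵏ, μˡ) of D_KL(μᵏ‖τᵏ)+D_KL(μˡ‖τˡ) subject to μˡ_i = ∑_{j∈N(i)} μᵏ_j satisfies μˡ_i = √(τ̄_i τˡ_i) / ∑_s √(τ̄_s τˡ_s), and μᵏ_j = μˡ_i · τᵏ_j / τ̄_i for j ∈ N(i). -/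
open Finset

lemma my_log_ge {x : ℝ} (hx : 0 < x) : 1 - 1/x ≤ Real.log x := by
  have h := Real.log_le_sub_one_of_pos (show (0:ℝ) < 1/x by positivity)
  rw [one_div, Real.log_inv] at h
  have : 1/x = x⁻¹ := one_div x
  rw [this]
  linarith

/-- Gibbs' inequality. -/
lemma my_gibbs {I : Type*} [Fintype I] (ν μ : I → ℝ) (hν : ∀ i, 0 ≤ ν i)
    (hμ : ∀ i, 0 < μ i) (h : ∑ i, ν i = ∑ i, μ i) :
    0 ≤ ∑ i, ν i * Real.log (ν i / μ i) := by
  have key : ∀ i, ν i - μ i ≤ ν i * Real.log (ν i / μ i) := by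
    intro i
    rcases eq_or_lt_of_le (hν i) with h0 | h0
    · rw [← h0]
      simp
      linarith [(hμ i).le]
    · have hx : 0 < ν i / μ i := div_pos h0 (hμ i)
      have := my_log_ge hx
      have h2 : 1/(ν i / μ i) = μ i / ν i := by
        field_simp
      rw [h2] at this
      have := mul_le_mul_of_nonneg_left this (hν i)
      have hne : ν i ≠ 0 := ne_of_gt h0
      calc ν i - μ i = ν i * (1 - μ i / ν i) := by field_simp
        _ ≤ ν i * Real.log (ν i / μ i) := this
  calc (0:ℝ) = ∑ i, (ν i - μ i) := by rw [Finset.sum_sub_distrib, h, sub_self]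
    _ ≤ _ := Finset.sum_le_sum fun i _ => key i

/-- Log-sum inequality. -/
lemma my_logsum {J : Type*} (s : Finset J) (hs : s.Nonempty) (a b : J → ℝ)
    (ha : ∀ j ∈ s, 0 ≤ a j) (hb : ∀ j ∈ s, 0 < b j) :
    (∑ j ∈ s, a j) * Real.log ((∑ j ∈ s, a j) / (∑ j ∈ s, b j)) ≤
      ∑ j ∈ s, a j * Real.log (a j / b j) := by
  set A := ∑ j ∈ s, a j with hA
  set B := ∑ j ∈ s, b j with hB
  have hA0 : 0 ≤ A := Finset.sum_nonneg ha
  have hB0 : 0 < B := Finset.sum_pos hb hs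
  have key : ∀ j ∈ s, a j * Real.log (A/B) + (a j - b j * (A/B)) ≤
      a j * Real.log (a j / b j) := by
    intro j hj
    rcases eq_or_lt_of_le (ha j hj) with h0 | h0
    · rw [← h0]
      simp only [zero_mul, zero_add, zero_sub, neg_le]
      have : (0:ℝ) ≤ b j * (A/B) := mul_nonneg (hb j hj).le (div_nonneg hA0 hB0.le)
      linarith
    · have hApos : 0 < A := lt_of_lt_of_le h0 (Finset.single_le_sum ha hj)
      have hbj := hb j hj
      have hx : 0 < (a j / b j) / (A / B) := by positivity
      have hlog : Real.log ((a j / b j) / (A / B)) =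
          Real.log (a j / b j) - Real.log (A / B) :=
        Real.log_div (by positivity) (by positivity)
      have h1 := my_log_ge hx
      have h2 : 1/((a j / b j) / (A / B)) = (b j * A) / (a j * B) := by
        field_simp
      rw [h2, hlog] at h1
      have h3 := mul_le_mul_of_nonneg_left h1 h0.le
      have h4 : a j * (1 - b j * A / (a j * B)) = a j - b j * (A/B) := by
        field_simp
      rw [h4] at h3
      linarith [h3]
  have := Finset.sum_le_sum key
  have hsum : ∑ j ∈ s, (a j * Real.log (A/B) + (a j - b j * (A/B))) =
      A * Real.log (A/B) := by
    rw [Finset.sum_add_distrib, Finset.sum_sub_distrib, ← Finset.sum_mul,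
      ← Finset.sum_mul, ← hA, ← hB]
    have : B * (A/B) = A := by field_simp
    rw [this]; ring
  linarith [this, hsum.symm.le]

theorem stmt15 {I J : Type*} [Fintype I] [Fintype J] [DecidableEq I]
    (cls : J → I) (hsurj : Function.Surjective cls)
    (τk : J → ℝ) (τl : I → ℝ)
    (hτk : ∀ j, 0 < τk j) (hτl : ∀ i, 0 < τl i)
    (hτk1 : ∑ j, τk j = 1) (hτl1 : ∑ i, τl i = 1)
    (τbar : I → ℝ)
    (hτbar : ∀ i, τbar i = ∑ j ∈ univ.filter (fun j => cls j = i), τk j)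
    (μl : I → ℝ) (hμl : ∀ i, μl i = Real.sqrt (τbar i * τl i) / ∑ s, Real.sqrt (τbar s * τl s))
    (μk : J → ℝ) (hμk : ∀ j, μk j = μl (cls j) * τk j / τbar (cls j)) :
    -- (μk, μl) is the minimizer of the consistency program
    ((∀ j, 0 ≤ μk j) ∧ (∑ j, μk j = 1) ∧ (∀ i, 0 ≤ μl i) ∧ (∑ i, μl i = 1) ∧
      (∀ i, μl i = ∑ j ∈ univ.filter (fun j => cls j = i), μk j)) ∧
    ∀ νk : J → ℝ, ∀ νl : I → ℝ,
      (∀ j, 0 ≤ νk j) → (∑ j, νk j = 1) → (∀ i, 0 ≤ νl i) → (∑ i, νl i = 1) →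
      (∀ i, νl i = ∑ j ∈ univ.filter (fun j => cls j = i), νk j) →
      KL μk τk + KL μl τl ≤ KL νk τk + KL νl τl := by
  classical
  set Z := ∑ s, Real.sqrt (τbar s * τl s) with hZ
  -- fibers are nonempty
  have hfib : ∀ i, (univ.filter (fun j => cls j = i)).Nonempty := by
    intro i
    obtain ⟨j, hj⟩ := hsurj i
    exact ⟨j, by simp [hj]⟩
  have hτbarpos : ∀ i, 0 < τbar i := by
    intro i
    rw [hτbar i]
    exact Finset.sum_pos (fun j _ => hτk j) (hfib i)
  have hIne : (univ : Finset I).Nonempty := by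
    rcases (univ : Finset I).eq_empty_or_nonempty with h | h
    · rw [h] at hτl1; simp at hτl1
    · exact h
  have hZpos : 0 < Z := by
    rw [hZ]
    exact Finset.sum_pos (fun i _ => Real.sqrt_pos.2 (mul_pos (hτbarpos i) (hτl i))) hIne
  have hμlpos : ∀ i, 0 < μl i := by
    intro i
    rw [hμl i]
    exact div_pos (Real.sqrt_pos.2 (mul_pos (hτbarpos i) (hτl i))) hZpos
  have hμkpos : ∀ j, 0 < μk j := by
    intro j
    rw [hμk j]
    exact div_pos (mul_pos (hμlpos _) (hτk j)) (hτbarpos _)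
  have hμl1 : ∑ i, μl i = 1 := by
    have : ∑ i, μl i = (∑ i, Real.sqrt (τbar i * τl i)) / Z := by
      rw [Finset.sum_div]
      exact Finset.sum_congr rfl fun i _ => hμl i
    rw [this, ← hZ, div_self (ne_of_gt hZpos)]
  -- marginal consistency
  have hcons : ∀ i, ∑ j ∈ univ.filter (fun j => cls j = i), μk j = μl i := by
    intro i
    have : ∑ j ∈ univ.filter (fun j => cls j = i), μk j =
        ∑ j ∈ univ.filter (fun j => cls j = i), (μl i / τbar i) * τk j := by
      apply Finset.sum_congr rfl
      intro j hj
      have hcj : cls j = i := by simpa using hj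
      rw [hμk j, hcj]; ring
    rw [this, ← Finset.mul_sum, ← hτbar i]
    exact div_mul_cancel₀ (μl i) (ne_of_gt (hτbarpos i))
  have hμk1 : ∑ j, μk j = 1 := by
    have h := Finset.sum_fiberwise_of_maps_to (fun j (_ : j ∈ univ) => mem_univ (cls j)) μk
    rw [← h]
    rw [Finset.sum_congr rfl fun i _ => hcons i, hμl1]
  refine ⟨⟨fun j => (hμkpos j).le, hμk1, fun i => (hμlpos i).le, hμl1,
    fun i => (hcons i).symm⟩, ?_⟩
  -- the value at the minimizer
  have hlogμl : ∀ i, Real.log (μl i / τbar i) + Real.log (μl i / τl i) =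
      -2 * Real.log Z := by
    intro i
    have h1 : Real.log (μl i) = (Real.log (τbar i) + Real.log (τl i)) / 2 - Real.log Z := by
      rw [hμl i,
        Real.log_div (ne_of_gt (Real.sqrt_pos.2 (mul_pos (hτbarpos i) (hτl i)))) (ne_of_gt hZpos),
        Real.log_sqrt (mul_pos (hτbarpos i) (hτl i)).le,
        Real.log_mul (ne_of_gt (hτbarpos i)) (ne_of_gt (hτl i))]

    rw [Real.log_div (ne_of_gt (hμlpos i)) (ne_of_gt (hτbarpos i)),
      Real.log_div (ne_of_gt (hμlpos i)) (ne_of_gt (hτl i)), h1]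
    ring
  have hKLμk : KL μk τk = ∑ i, μl i * Real.log (μl i / τbar i) := by
    unfold KL
    rw [← Finset.sum_fiberwise_of_maps_to (fun j (_ : j ∈ univ) => mem_univ (cls j))
      (fun j => μk j * Real.log (μk j / τk j))]
    apply Finset.sum_congr rfl
    intro i _
    have : ∀ j ∈ univ.filter (fun j => cls j = i),
        μk j * Real.log (μk j / τk j) = μk j * Real.log (μl i / τbar i) := by
      intro j hj
      have hcj : cls j = i := by simpa using hj
      have : μk j / τk j = μl i / τbar i := by
        rw [hμk j, hcj, div_div, mul_comm (τbar i) (τk j), mul_comm (μl i) (τk j)]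
        exact mul_div_mul_left _ _ (ne_of_gt (hτk j))
      rw [this]
    rw [Finset.sum_congr rfl this, ← Finset.sum_mul, hcons i]
  have hval : KL μk τk + KL μl τl = -2 * Real.log Z := by
    rw [hKLμk]
    unfold KL
    rw [← Finset.sum_add_distrib]
    have : ∀ i ∈ (univ : Finset I),
        μl i * Real.log (μl i / τbar i) + μl i * Real.log (μl i / τl i) =
        μl i * (-2 * Real.log Z) := by
      intro i _
      rw [← mul_add, hlogμl i]
    rw [Finset.sum_congr rfl this, ← Finset.sum_mul, hμl1, one_mul]
  rw [hval]
  -- the inequality for arbitrary feasible (νk, νl)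
  intro νk νl hνk hνk1 hνl hνl1 hνcons
  -- log-sum per fiber
  have step1 : ∑ i, νl i * Real.log (νl i / τbar i) ≤ KL νk τk := by
    unfold KL
    rw [← Finset.sum_fiberwise_of_maps_to (fun j (_ : j ∈ univ) => mem_univ (cls j))
      (fun j => νk j * Real.log (νk j / τk j))]
    apply Finset.sum_le_sum
    intro i _
    have := my_logsum (univ.filter (fun j => cls j = i)) (hfib i) νk τk
      (fun j _ => hνk j) (fun j _ => hτk j)
    rw [← hνcons i, ← hτbar i] at this
    exact this
  -- identity relating the ν-objective lower bound to KL(νl‖μl)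
  have step2 : ∀ i, νl i * Real.log (νl i / τbar i) + νl i * Real.log (νl i / τl i) =
      2 * (νl i * Real.log (νl i / μl i)) + νl i * (-2 * Real.log Z) := by
    intro i
    rcases eq_or_lt_of_le (hνl i) with h0 | h0
    · rw [← h0]; ring
    · have hμ := hμlpos i
      have h1 : Real.log (μl i) = (Real.log (τbar i) + Real.log (τl i)) / 2 - Real.log Z := by
        rw [hμl i,
          Real.log_div (ne_of_gt (Real.sqrt_pos.2 (mul_pos (hτbarpos i) (hτl i)))) (ne_of_gt hZpos),
          Real.log_sqrt (mul_pos (hτbarpos i) (hτl i)).le,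
          Real.log_mul (ne_of_gt (hτbarpos i)) (ne_of_gt (hτl i))]

      rw [Real.log_div (ne_of_gt h0) (ne_of_gt (hτbarpos i)),
        Real.log_div (ne_of_gt h0) (ne_of_gt (hτl i)),
        Real.log_div (ne_of_gt h0) (ne_of_gt hμ), h1]
      ring
  have step3 : 0 ≤ ∑ i, νl i * Real.log (νl i / μl i) :=
    my_gibbs νl μl hνl hμlpos (by rw [hνl1, hμl1])
  have hsum2 : ∑ i, (νl i * Real.log (νl i / τbar i) + νl i * Real.log (νl i / τl i)) =
      2 * (∑ i, νl i * Real.log (νl i / μl i)) + (-2 * Real.log Z) := by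
    rw [Finset.sum_congr rfl fun i _ => step2 i, Finset.sum_add_distrib,
      ← Finset.mul_sum, ← Finset.sum_mul, hνl1, one_mul]
  have hfinal : -2 * Real.log Z ≤
      ∑ i, νl i * Real.log (νl i / τbar i) + ∑ i, νl i * Real.log (νl i / τl i) := by
    rw [← Finset.sum_add_distrib, hsum2]
    linarith
  unfold KL
  calc -2 * Real.log Z ≤
      ∑ i, νl i * Real.log (νl i / τbar i) + ∑ i, νl i * Real.log (νl i / τl i) := hfinal
    _ ≤ (∑ j, νk j * Real.log (νk j / τk j)) + ∑ i, νl i * Real.log (νl i / τl i) := by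
        have := step1; unfold KL at this; linarith
end

section
/- If λ_i = ½ log(τ̄_i / τˡ_i) with τ̄_i = ∑_{j∈N(i)} τᵏ_j, then the two reparameterized distributions μˡ_i = τˡ_i e^{λ_i}/∑_s τˡ_s e^{λ_s} and μᵏ_j = τᵏ_j e^{-λ_i}/∑_t ∑_{s∈N(t)} τᵏ_s e^{-λ_t} (j ∈ N(i)) agree on their marginals: ∑_{j∈N(i)} μᵏ_j = μˡ_i for all i. -/
open Finset

theorem stmt16 {I J : Type*} [Fintype I] [Fintype J] [DecidableEq I]
    (cls : J → I) (hsurj : Function.Surjective cls)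
    (τk : J → ℝ) (τl : I → ℝ)
    (hτk : ∀ j, 0 < τk j) (hτl : ∀ i, 0 < τl i)
    (hτk1 : ∑ j, τk j = 1) (hτl1 : ∑ i, τl i = 1)
    (τbar : I → ℝ)
    (hτbar : ∀ i, τbar i = ∑ j ∈ univ.filter (fun j => cls j = i), τk j)
    (lam : I → ℝ) (hlam : ∀ i, lam i = (1 / 2) * Real.log (τbar i / τl i))
    (μl : I → ℝ)
    (hμl : ∀ i, μl i = τl i * Real.exp (lam i) / ∑ s, τl s * Real.exp (lam s))
    (μk : J → ℝ)
    (hμk : ∀ j, μk j = τk j * Real.exp (-lam (cls j)) /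
      ∑ t, ∑ s ∈ univ.filter (fun s => cls s = t), τk s * Real.exp (-lam t)) :
    ∀ i, ∑ j ∈ univ.filter (fun j => cls j = i), μk j = μl i := by
  have hbar : ∀ i, 0 < τbar i := by
    intro i
    rw [hτbar]
    obtain ⟨j, hj⟩ := hsurj i
    exact sum_pos' (fun j _ => (hτk j).le)
      ⟨j, by simp [hj], hτk j⟩
  have key : ∀ i, τl i * Real.exp (lam i) = τbar i * Real.exp (-lam i) := by
    intro i
    have h1 : (0:ℝ) < τl i * Real.exp (lam i) := mul_pos (hτl i) (Real.exp_pos _)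
    have h2 : (0:ℝ) < τbar i * Real.exp (-lam i) := mul_pos (hbar i) (Real.exp_pos _)
    have hsq : (τl i * Real.exp (lam i))^2 = (τbar i * Real.exp (-lam i))^2 := by
      have he : Real.exp (lam i) ^ 2 = τbar i / τl i := by
        rw [← Real.exp_nat_mul, hlam]
        push_cast
        rw [show (2:ℝ) * (1 / 2 * Real.log (τbar i / τl i)) = Real.log (τbar i / τl i) by ring]
        exact Real.exp_log (div_pos (hbar i) (hτl i))
      have he' : Real.exp (-lam i) ^ 2 = τl i / τbar i := by
        rw [← Real.exp_nat_mul, hlam]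
        push_cast
        rw [show (2:ℝ) * -(1 / 2 * Real.log (τbar i / τl i)) = -Real.log (τbar i / τl i) by ring]
        rw [← Real.log_inv, inv_div]
        exact Real.exp_log (div_pos (hτl i) (hbar i))
      rw [mul_pow, mul_pow, he, he']
      field_simp [(hτl i).ne', (hbar i).ne']
    nlinarith [h1, h2, hsq]
  intro i
  have hden : (∑ t, ∑ s ∈ univ.filter (fun s => cls s = t), τk s * Real.exp (-lam t))
      = ∑ s, τl s * Real.exp (lam s) := by
    refine Finset.sum_congr rfl fun t _ => ?_
    rw [← Finset.sum_mul, ← hτbar, key]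
  have hnum : ∑ j ∈ univ.filter (fun j => cls j = i), μk j
      = τbar i * Real.exp (-lam i) / ∑ s, τl s * Real.exp (lam s) := by
    rw [hτbar, Finset.sum_mul, Finset.sum_div]
    refine Finset.sum_congr rfl fun j hj => ?_
    simp only [mem_filter] at hj
    rw [hμk, hj.2, hden]
  rw [hnum, hμl, key]
end

section
/- For probability vectors p, q on Fin n with q strictly positive, Pinsker's inequality holds: D_KL(p‖q) ≥ 2 (∑_i |p_i − q_i| / 2)², i.e., KL divergence upper-bounds twice the squared total variation distance. -/
open Real Finset

private noncomputable def Hfun : ℝ → ℝ := fun t => (t + 1) * Real.log t - 2 * (t - 1)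

private lemma hasDerivAt_H {t : ℝ} (ht : 0 < t) :
    HasDerivAt Hfun (Real.log t + t⁻¹ - 1) t := by
  have h1 : HasDerivAt (fun t : ℝ => (t + 1) * Real.log t)
      (1 * Real.log t + (t + 1) * t⁻¹) t :=
    (((hasDerivAt_id t).add_const 1).mul (Real.hasDerivAt_log ht.ne'))
  have h2 : HasDerivAt (fun t : ℝ => 2 * (t - 1)) 2 t := by
    simpa using ((hasDerivAt_id t).sub_const 1).const_mul 2
  have := h1.sub h2
  refine this.congr_deriv ?_
  field_simp
  ring

private lemma H_mono : MonotoneOn Hfun (Set.Ioi (0:ℝ)) := by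
  apply monotoneOn_of_deriv_nonneg (convex_Ioi 0)
  · intro t ht
    exact (hasDerivAt_H ht).continuousAt.continuousWithinAt
  · intro t ht
    rw [interior_Ioi] at ht
    exact (hasDerivAt_H ht).differentiableAt.differentiableWithinAt
  · intro t ht
    rw [interior_Ioi] at ht
    rw [(hasDerivAt_H ht).deriv]
    have := Real.one_sub_inv_le_log_of_pos ht
    linarith

private noncomputable def Gfun : ℝ → ℝ :=
  fun t => 2 * (t + 2) * (t * Real.log t - t + 1) - 3 * (t - 1) ^ 2

private lemma hasDerivAt_G {t : ℝ} (ht : 0 < t) :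
    HasDerivAt Gfun (4 * Hfun t) t := by
  have h1 : HasDerivAt (fun t : ℝ => t * Real.log t - t + 1)
      (Real.log t + 1 - 1) t :=
    ((Real.hasDerivAt_mul_log ht.ne').sub (hasDerivAt_id t)).add_const 1
  have h2 : HasDerivAt (fun t : ℝ => 2 * (t + 2)) 2 t := by
    simpa using ((hasDerivAt_id t).add_const 2).const_mul 2
  have h3 : HasDerivAt (fun t : ℝ => 3 * (t - 1) ^ 2) (3 * (2 * (t - 1))) t := by
    simpa using (((hasDerivAt_id t).sub_const 1).pow 2).const_mul 3
  have := (h2.mul h1).sub h3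
  refine this.congr_deriv ?_
  simp only [Hfun]
  ring

private lemma G_nonneg {t : ℝ} (ht : 0 < t) : 0 ≤ Gfun t := by
  have hG1 : Gfun 1 = 0 := by simp [Gfun]
  rcases le_or_gt 1 t with h | h
  · have mono : MonotoneOn Gfun (Set.Ici (1:ℝ)) := by
      apply monotoneOn_of_deriv_nonneg (convex_Ici 1)
      · intro s hs
        exact (hasDerivAt_G (lt_of_lt_of_le one_pos hs)).continuousAt.continuousWithinAt
      · intro s hs
        rw [interior_Ici] at hs
        exact (hasDerivAt_G (lt_trans one_pos hs)).differentiableAt.differentiableWithinAt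
      · intro s hs
        rw [interior_Ici] at hs
        rw [(hasDerivAt_G (lt_trans one_pos hs)).deriv]
        have hH1 : Hfun 1 = 0 := by simp [Hfun]
        have := H_mono (Set.mem_Ioi.2 one_pos) (Set.mem_Ioi.2 (lt_trans one_pos hs)) hs.le
        rw [hH1] at this
        linarith
    have := mono Set.self_mem_Ici (Set.mem_Ici.2 h) h
    rw [hG1] at this; exact this
  · have anti : AntitoneOn Gfun (Set.Ioc (0:ℝ) 1) := by
      apply antitoneOn_of_deriv_nonpos (convex_Ioc 0 1)
      · intro s hs
        exact (hasDerivAt_G hs.1).continuousAt.continuousWithinAt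
      · intro s hs
        rw [interior_Ioc] at hs
        exact (hasDerivAt_G hs.1).differentiableAt.differentiableWithinAt
      · intro s hs
        rw [interior_Ioc] at hs
        rw [(hasDerivAt_G hs.1).deriv]
        have hH1 : Hfun 1 = 0 := by simp [Hfun]
        have := H_mono (Set.mem_Ioi.2 hs.1) (Set.mem_Ioi.2 one_pos) hs.2.le
        rw [hH1] at this
        linarith
    have := anti (Set.mem_Ioc.2 ⟨ht, h.le⟩) (Set.mem_Ioc.2 ⟨one_pos, le_refl 1⟩) h.le
    rw [hG1] at this; exact this

/-- Pointwise Pinsker bound. -/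
private lemma pointwise {x y : ℝ} (hx : 0 ≤ x) (hy : 0 < y) :
    x - y + 3 / 2 * (x - y) ^ 2 / (x + 2 * y) ≤ x * Real.log (x / y) := by
  rcases eq_or_lt_of_le hx with h0 | hx
  · rw [← h0]
    have : (0:ℝ) - y + 3 / 2 * (0 - y) ^ 2 / (0 + 2 * y) = -y / 4 := by
      field_simp; ring
    rw [this]
    simp only [zero_mul]
    linarith
  · set t := x / y with htdef
    have ht : 0 < t := div_pos hx hy
    have hxty : x = t * y := by rw [htdef, div_mul_cancel₀ _ hy.ne']
    have hG := G_nonneg ht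
    have key : 3 * (t - 1) ^ 2 ≤ 2 * (t + 2) * (t * Real.log t - t + 1) := by
      have := hG; simp only [Gfun] at this; linarith
    have ht2 : 0 < t + 2 := by linarith
    -- multiply through
    have h2 : 3 / 2 * (t - 1) ^ 2 / (t + 2) ≤ t * Real.log t - t + 1 := by
      rw [div_le_iff₀ ht2]
      nlinarith
    have hxy2 : x + 2 * y = y * (t + 2) := by rw [hxty]; ring
    have hxmy : x - y = y * (t - 1) := by rw [hxty]; ring
    rw [hxy2, hxmy, hxty]
    have hstep : y * (t - 1) + 3 / 2 * (y * (t - 1)) ^ 2 / (y * (t + 2))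
        = y * ((t - 1) + 3 / 2 * (t - 1) ^ 2 / (t + 2)) := by
      field_simp
    rw [hstep]
    have : t * y * Real.log t = y * (t * Real.log t) := by ring
    rw [this]
    apply mul_le_mul_of_nonneg_left _ hy.le
    linarith

theorem stmt18 {n : ℕ} (p q : Fin n → ℝ)
    (hp : ∀ i, 0 ≤ p i) (hq : ∀ i, 0 < q i)
    (hp1 : ∑ i, p i = 1) (hq1 : ∑ i, q i = 1) :
    2 * ((∑ i, |p i - q i|) / 2) ^ 2 ≤ ∑ i, p i * Real.log (p i / q i) := by
  set w : Fin n → ℝ := fun i => p i + 2 * q i with hw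
  have hwpos : ∀ i, 0 < w i := fun i => by have := hp i; have := hq i; simp [hw]; linarith
  set S : ℝ := ∑ i, (p i - q i) ^ 2 / w i with hS
  -- step 1 : KL ≥ 3/2 * S
  have step1 : 0 + 3 / 2 * S ≤ ∑ i, p i * Real.log (p i / q i) := by
    have : ∀ i ∈ Finset.univ, p i - q i + 3 / 2 * (p i - q i) ^ 2 / w i
        ≤ p i * Real.log (p i / q i) := fun i _ => pointwise (hp i) (hq i)
    have hsum := Finset.sum_le_sum this
    calc 0 + 3 / 2 * S = ∑ i, (p i - q i + 3 / 2 * (p i - q i) ^ 2 / w i) := by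
          rw [Finset.sum_add_distrib, Finset.sum_sub_distrib, hp1, hq1]
          rw [hS, Finset.mul_sum]
          congr 1
          · ring
          · apply Finset.sum_congr rfl; intro i _; ring
      _ ≤ _ := hsum
  -- step 2 : Cauchy-Schwarz : (∑|p-q|)^2 ≤ 3 * S
  have step2 : (∑ i, |p i - q i|) ^ 2 ≤ 3 * S := by
    have cs := Finset.sum_mul_sq_le_sq_mul_sq Finset.univ
      (fun i => Real.sqrt (w i)) (fun i => |p i - q i| / Real.sqrt (w i))
    have h1 : ∀ i, Real.sqrt (w i) * (|p i - q i| / Real.sqrt (w i)) = |p i - q i| := by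
      intro i
      field_simp [Real.sqrt_ne_zero'.2 (hwpos i)]
    have h2 : ∀ i, Real.sqrt (w i) ^ 2 = w i := fun i => Real.sq_sqrt (hwpos i).le
    have h3 : ∀ i, (|p i - q i| / Real.sqrt (w i)) ^ 2 = (p i - q i) ^ 2 / w i := by
      intro i
      rw [div_pow, sq_abs, h2]
    simp only [h1] at cs
    calc (∑ i, |p i - q i|) ^ 2 ≤ (∑ i, Real.sqrt (w i) ^ 2) * ∑ i, (|p i - q i| / Real.sqrt (w i)) ^ 2 := cs
      _ = 3 * S := by
          simp only [h2, h3]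
          simp only [hw]
          rw [Finset.sum_add_distrib, hp1, ← Finset.mul_sum, hq1, hS]
          ring
  nlinarith [step1, step2]
end

section
/- For the penalized objective of Eq. (5) with D = KL: if for some λ the divergence term D(μˡ(λ), marg(μᵏ(λ))) = 0, where μˡ(λ) and μᵏ(λ) are the reparameterized distributions, then (μᵏ(λ), μˡ(λ)) is feasible and optimal for the primal program of Eq. (3). -/
open Finset

lemma kl_term_ge (ν μ : ℝ) (hν : 0 ≤ ν) (hμ : 0 < μ) :
    ν - μ ≤ ν * Real.log (ν / μ) := by
  rcases eq_or_lt_of_le hν with h | h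
  · simp [← h]; linarith
  · have h1 : Real.log (μ / ν) ≤ μ / ν - 1 := Real.log_le_sub_one_of_pos (by positivity)
    have h2 : Real.log (ν / μ) = -Real.log (μ / ν) := by
      rw [← Real.log_inv]; congr 1; field_simp
    have hx : ν * (μ / ν - 1) = μ - ν := by field_simp
    nlinarith

lemma kl_term_gt (ν μ : ℝ) (hν : 0 < ν) (hμ : 0 < μ) (hne : ν ≠ μ) :
    ν - μ < ν * Real.log (ν / μ) := by
  have h1 : Real.log (μ / ν) < μ / ν - 1 := by
    apply Real.log_lt_sub_one_of_pos (by positivity)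
    intro h; apply hne; field_simp at h; linarith
  have h2 : Real.log (ν / μ) = -Real.log (μ / ν) := by
    rw [← Real.log_inv]; congr 1; field_simp
  have hx : ν * (μ / ν - 1) = μ - ν := by field_simp
  nlinarith

lemma gibbs_s19 {α : Type*} [Fintype α] (ν μ : α → ℝ) (hν : ∀ a, 0 ≤ ν a)
    (hμ : ∀ a, 0 < μ a) (hsum : ∑ a, ν a = ∑ a, μ a) : 0 ≤ KL ν μ := by
  have := Finset.sum_le_sum (fun a (_ : a ∈ univ) => kl_term_ge (ν a) (μ a) (hν a) (hμ a))
  unfold KL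
  rw [Finset.sum_sub_distrib, hsum] at this
  linarith

lemma decomp {α : Type*} [Fintype α] (ν μ τ c : α → ℝ) (Z : ℝ)
    (hν : ∀ a, 0 ≤ ν a) (hτ : ∀ a, 0 < τ a) (hZ : 0 < Z)
    (hμ : ∀ a, μ a = τ a * Real.exp (c a) / Z) :
    KL ν τ = KL ν μ + ∑ a, ν a * (c a - Real.log Z) := by
  unfold KL
  rw [← Finset.sum_add_distrib]
  apply Finset.sum_congr rfl
  intro a _
  rcases eq_or_lt_of_le (hν a) with h | h
  · simp [← h]
  · have hμa : 0 < μ a := by rw [hμ a]; exact div_pos (mul_pos (hτ a) (Real.exp_pos _)) hZ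
    have l1 : Real.log (ν a / τ a) = Real.log (ν a) - Real.log (τ a) :=
      Real.log_div h.ne' (hτ a).ne'
    have l2 : Real.log (ν a / μ a) = Real.log (ν a) - Real.log (μ a) :=
      Real.log_div h.ne' hμa.ne'
    have l3 : Real.log (μ a) = Real.log (τ a) + c a - Real.log Z := by
      rw [hμ a, Real.log_div (mul_pos (hτ a) (Real.exp_pos _)).ne' hZ.ne',
        Real.log_mul (hτ a).ne' (Real.exp_pos _).ne', Real.log_exp]
    rw [l1, l2, l3]; ring

lemma lin_sum {I J : Type*} [Fintype I] [Fintype J] [DecidableEq I]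
    (cls : J → I) (lam : I → ℝ) (νk : J → ℝ) (νl : I → ℝ) (a b : ℝ)
    (hνk1 : ∑ j, νk j = 1) (hνl1 : ∑ i, νl i = 1)
    (hfeas : ∀ i, νl i = ∑ j ∈ univ.filter (fun j => cls j = i), νk j) :
    ∑ j, νk j * (-lam (cls j) - a) + ∑ i, νl i * (lam i - b) = -a - b := by
  have h1 : ∑ j, νk j * (-lam (cls j)) = ∑ i, νl i * (-lam i) := by
    rw [← Finset.sum_fiberwise univ cls (fun j => νk j * (-lam (cls j)))]
    apply Finset.sum_congr rfl; intro i _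
    rw [hfeas i, Finset.sum_mul]
    apply Finset.sum_congr rfl; intro j hj
    rw [(Finset.mem_filter.mp hj).2]
  have e1 : ∑ j, νk j * (-lam (cls j) - a)
      = (∑ j, νk j * (-lam (cls j))) - (∑ j, νk j) * a := by
    rw [Finset.sum_mul, ← Finset.sum_sub_distrib]
    exact Finset.sum_congr rfl fun j _ => by ring
  have e2 : ∑ i, νl i * (lam i - b)
      = (∑ i, νl i * lam i) - (∑ i, νl i) * b := by
    rw [Finset.sum_mul, ← Finset.sum_sub_distrib]
    exact Finset.sum_congr rfl fun i _ => by ring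
  have h1' : ∑ i, νl i * (-lam i) = -∑ i, νl i * lam i := by
    rw [← Finset.sum_neg_distrib]; exact Finset.sum_congr rfl fun i _ => by ring
  rw [e1, e2, h1, h1', hνk1, hνl1]; ring

theorem stmt19 {I J : Type*} [Fintype I] [Fintype J] [DecidableEq I]
    (cls : J → I) (hsurj : Function.Surjective cls)
    (τk : J → ℝ) (τl : I → ℝ)
    (hτk : ∀ j, 0 < τk j) (hτl : ∀ i, 0 < τl i)
    (hτk1 : ∑ j, τk j = 1) (hτl1 : ∑ i, τl i = 1)
    (lam : I → ℝ)
    (μl : I → ℝ)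
    (hμl : ∀ i, μl i = τl i * Real.exp (lam i) / ∑ s, τl s * Real.exp (lam s))
    (μk : J → ℝ)
    (hμk : ∀ j, μk j = τk j * Real.exp (-lam (cls j)) /
      ∑ t, ∑ s ∈ univ.filter (fun s => cls s = t), τk s * Real.exp (-lam t))
    (marg : I → ℝ)
    (hmarg : ∀ i, marg i = ∑ j ∈ univ.filter (fun j => cls j = i), μk j)
    (hzero : KL μl marg = 0) :
    -- (μk, μl) is feasible and optimal for the primal program
    ((∀ j, 0 ≤ μk j) ∧ (∑ j, μk j = 1) ∧ (∀ i, 0 ≤ μl i) ∧ (∑ i, μl i = 1) ∧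
      (∀ i, μl i = ∑ j ∈ univ.filter (fun j => cls j = i), μk j)) ∧
    ∀ νk : J → ℝ, ∀ νl : I → ℝ,
      (∀ j, 0 ≤ νk j) → (∑ j, νk j = 1) → (∀ i, 0 ≤ νl i) → (∑ i, νl i = 1) →
      (∀ i, νl i = ∑ j ∈ univ.filter (fun j => cls j = i), νk j) →
      KL μk τk + KL μl τl ≤ KL νk τk + KL νl τl := by
  have hIne : (Finset.univ : Finset I).Nonempty := by
    rcases Finset.eq_empty_or_nonempty (univ : Finset I) with h | h
    · rw [h, Finset.sum_empty] at hτl1; norm_num at hτl1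
    · exact h
  have hJne : (Finset.univ : Finset J).Nonempty := by
    rcases Finset.eq_empty_or_nonempty (univ : Finset J) with h | h
    · rw [h, Finset.sum_empty] at hτk1; norm_num at hτk1
    · exact h
  set Zl : ℝ := ∑ s, τl s * Real.exp (lam s) with hZldef
  have hZl : 0 < Zl :=
    Finset.sum_pos (fun s _ => mul_pos (hτl s) (Real.exp_pos _)) hIne
  set Zk : ℝ := ∑ j, τk j * Real.exp (-lam (cls j)) with hZkdef
  have hZk : 0 < Zk :=
    Finset.sum_pos (fun j _ => mul_pos (hτk j) (Real.exp_pos _)) hJne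
  -- the double sum equals Zk
  have hfib : (∑ t, ∑ s ∈ univ.filter (fun s => cls s = t),
      τk s * Real.exp (-lam t)) = Zk := by
    rw [hZkdef, ← Finset.sum_fiberwise univ cls (fun j => τk j * Real.exp (-lam (cls j)))]
    apply Finset.sum_congr rfl; intro t _
    apply Finset.sum_congr rfl; intro s hs
    rw [(Finset.mem_filter.mp hs).2]
  have hμk' : ∀ j, μk j = τk j * Real.exp (-lam (cls j)) / Zk := by
    intro j; rw [hμk j, hfib]
  have hμkpos : ∀ j, 0 < μk j := fun j => by
    rw [hμk' j]; exact div_pos (mul_pos (hτk j) (Real.exp_pos _)) hZk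
  have hμlpos : ∀ i, 0 < μl i := fun i => by
    rw [hμl i]; exact div_pos (mul_pos (hτl i) (Real.exp_pos _)) hZl
  have hμk1 : ∑ j, μk j = 1 := by
    rw [Finset.sum_congr rfl fun j _ => hμk' j, ← Finset.sum_div, ← hZkdef,
      div_self hZk.ne']
  have hμl1 : ∑ i, μl i = 1 := by
    rw [Finset.sum_congr rfl fun i _ => hμl i, ← Finset.sum_div, ← hZldef,
      div_self hZl.ne']
  have hmargpos : ∀ i, 0 < marg i := fun i => by
    obtain ⟨j, hj⟩ := hsurj i
    rw [hmarg i]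
    exact Finset.sum_pos (fun s _ => hμkpos s)
      ⟨j, Finset.mem_filter.mpr ⟨Finset.mem_univ _, hj⟩⟩
  have hmarg1 : ∑ i, marg i = 1 := by
    rw [Finset.sum_congr rfl fun i _ => hmarg i,
      Finset.sum_fiberwise univ cls μk, hμk1]
  -- KL μl marg = 0 forces μl = marg
  have hfeasμ : ∀ i, μl i = ∑ j ∈ univ.filter (fun j => cls j = i), μk j := by
    intro i
    rw [← hmarg i]
    by_contra hne
    have hterm : ∀ a ∈ (univ : Finset I),
        0 ≤ μl a * Real.log (μl a / marg a) - (μl a - marg a) := fun a _ => by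
      have := kl_term_ge (μl a) (marg a) (hμlpos a).le (hmargpos a)
      linarith
    have hsum0 : ∑ a, (μl a * Real.log (μl a / marg a) - (μl a - marg a)) = 0 := by
      rw [Finset.sum_sub_distrib, Finset.sum_sub_distrib, hμl1, hmarg1]
      have : ∑ a, μl a * Real.log (μl a / marg a) = KL μl marg := rfl
      rw [this, hzero]; ring
    have := (Finset.sum_eq_zero_iff_of_nonneg hterm).mp hsum0 i (Finset.mem_univ i)
    have hgt := kl_term_gt (μl i) (marg i) (hμlpos i) (hmargpos i) hne
    linarith
  refine ⟨⟨fun j => (hμkpos j).le, hμk1, fun i => (hμlpos i).le, hμl1, hfeasμ⟩, ?_⟩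
  intro νk νl hνk0 hνk1 hνl0 hνl1 hfeas
  have dμk := decomp μk μk τk (fun j => -lam (cls j)) Zk
    (fun j => (hμkpos j).le) hτk hZk hμk'
  have dμl := decomp μl μl τl lam Zl (fun i => (hμlpos i).le) hτl hZl hμl
  have dνk := decomp νk μk τk (fun j => -lam (cls j)) Zk hνk0 hτk hZk hμk'
  have dνl := decomp νl μl τl lam Zl hνl0 hτl hZl hμl
  have hKLμμk : KL μk μk = 0 := by
    unfold KL
    exact Finset.sum_eq_zero fun j _ => by
      rw [div_self (hμkpos j).ne', Real.log_one, mul_zero]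
  have hKLμμl : KL μl μl = 0 := by
    unfold KL
    exact Finset.sum_eq_zero fun i _ => by
      rw [div_self (hμlpos i).ne', Real.log_one, mul_zero]
  have linμ := lin_sum cls lam μk μl (Real.log Zk) (Real.log Zl) hμk1 hμl1 hfeasμ
  have linν := lin_sum cls lam νk νl (Real.log Zk) (Real.log Zl) hνk1 hνl1 hfeas
  have g1 : 0 ≤ KL νk μk := gibbs_s19 νk μk hνk0 hμkpos (by rw [hνk1, hμk1])
  have g2 : 0 ≤ KL νl μl := gibbs_s19 νl μl hνl0 hμlpos (by rw [hνl1, hμl1])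
  have eq1 : ∀ j, (-lam (cls j) - Real.log Zk)
      = ((fun j => -lam (cls j)) j - Real.log Zk) := fun _ => rfl
  calc KL μk τk + KL μl τl
      = (KL μk μk + ∑ j, μk j * (-lam (cls j) - Real.log Zk))
        + (KL μl μl + ∑ i, μl i * (lam i - Real.log Zl)) := by rw [dμk, dμl]
    _ = -(Real.log Zk) - Real.log Zl := by
        rw [hKLμμk, hKLμμl]; rw [zero_add, zero_add]; linarith [linμ]
    _ ≤ (KL νk μk + ∑ j, νk j * (-lam (cls j) - Real.log Zk))
        + (KL νl μl + ∑ i, νl i * (lam i - Real.log Zl)) := by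
        have : (∑ j, νk j * (-lam (cls j) - Real.log Zk))
            + ∑ i, νl i * (lam i - Real.log Zl)
            = -(Real.log Zk) - Real.log Zl := linν
        linarith
    _ = KL νk τk + KL νl τl := by rw [← dνk, ← dνl]
end
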